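/- Let d ≥ 1 be an integer, α > d real, γ = (1+d)/(α−d), and v > 0 real. Define 𝒞_FF(r,t) = exp(vt − r/t^γ) + t^{(α+d)(1+γ)} r^{−(α+d)} for r > 0 and t > 1. Then for every real γ' > (α+d)(α+1)/(α(α−d)) + 1/α: lim_{t→∞} t ∫_{t^{γ'}}^∞ r^{d−1} 𝒞_FF(r,t) dr = 0 (in particular the integral is finite for every t > 1). -/

import Mathlib

open Filter Real MeasureTheory


lemma ff_pow_le_factorial_mul_exp (n : ℕ) {x : ℝ} (hx : 0 ≤ x) :
    x ^ n ≤ n.factorial * Real.exp x := by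
  have h := Real.sum_le_exp_of_nonneg hx (n + 1)
  have h1 : x ^ n / n.factorial ≤ ∑ i ∈ Finset.range (n + 1), x ^ i / i.factorial :=
    Finset.single_le_sum (f := fun i => x ^ i / (i.factorial : ℝ))
      (fun i _ => by positivity) (Finset.self_mem_range_succ n)
  have h2 : x ^ n / n.factorial ≤ Real.exp x := h1.trans h
  rw [div_le_iff₀ (by positivity)] at h2
  linarith

lemma ff_integral_exp_neg_mul (R : ℝ) {b : ℝ} (hb : 0 < b) :
    ∫ r in Set.Ioi R, Real.exp (-b * r) = Real.exp (-b * R) / b := by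
  have hderiv : ∀ x ∈ Set.Ici R, HasDerivAt (fun r => -Real.exp (-b * r) / b)
      (Real.exp (-b * x)) x := by
    intro x _
    have h1 : HasDerivAt (fun r : ℝ => -b * r) (-b) x := by
      simpa using (hasDerivAt_id x).const_mul (-b)
    have h2 := (Real.hasDerivAt_exp (-b * x)).comp x h1
    have h3 : HasDerivAt (fun r => -Real.exp (-b * r) / b) (-(Real.exp (-b * x) * -b) / b) x :=
      (h2.neg).div_const b
    convert h3 using 1
    field_simp
  have hint : IntegrableOn (fun x => Real.exp (-b * x)) (Set.Ioi R) :=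
    exp_neg_integrableOn_Ioi R hb
  have htends : Tendsto (fun r => -Real.exp (-b * r) / b) atTop (nhds 0) := by
    have h4 : Tendsto (fun r : ℝ => -b * r) atTop atBot :=
      tendsto_id.const_mul_atTop_of_neg (neg_lt_zero.mpr hb)
    have h5 : Tendsto (fun r : ℝ => Real.exp (-b * r)) atTop (nhds 0) :=
      Real.tendsto_exp_atBot.comp h4
    simpa using (h5.neg).div_const b
  have := integral_Ioi_of_hasDerivAt_of_tendsto' hderiv hint htends
  rw [this]; ring

lemma ff_ptbound (n : ℕ) (c T : ℝ) (hT : 0 < T) {r : ℝ} (hr : 0 ≤ r) :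
    r ^ n * Real.exp (c - r / T)
      ≤ (n.factorial * (2 * T) ^ n * Real.exp c) * Real.exp (-(1 / (2 * T)) * r) := by
  have hx : 0 ≤ r / (2 * T) := by positivity
  have h1 : (r / (2 * T)) ^ n ≤ n.factorial * Real.exp (r / (2 * T)) :=
    ff_pow_le_factorial_mul_exp n hx
  have h2 : r ^ n ≤ n.factorial * (2 * T) ^ n * Real.exp (r / (2 * T)) := by
    have h3 := mul_le_mul_of_nonneg_left h1 (by positivity : (0:ℝ) ≤ (2 * T) ^ n)
    calc r ^ n = (2 * T) ^ n * (r / (2 * T)) ^ n := by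
          rw [← mul_pow]; congr 1; field_simp
      _ ≤ (2 * T) ^ n * (n.factorial * Real.exp (r / (2 * T))) := h3
      _ = n.factorial * (2 * T) ^ n * Real.exp (r / (2 * T)) := by ring
  calc r ^ n * Real.exp (c - r / T)
      ≤ (n.factorial * (2 * T) ^ n * Real.exp (r / (2 * T))) * Real.exp (c - r / T) :=
        mul_le_mul_of_nonneg_right h2 (Real.exp_pos _).le
    _ = (n.factorial : ℝ) * (2 * T) ^ n * (Real.exp (r / (2 * T)) * Real.exp (c - r / T)) := by
        ring
    _ = (n.factorial * (2 * T) ^ n * Real.exp c) * Real.exp (-(1 / (2 * T)) * r) := by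
        have hexp : Real.exp (r / (2 * T)) * Real.exp (c - r / T)
            = Real.exp c * Real.exp (-(1 / (2 * T)) * r) := by
          rw [← Real.exp_add, ← Real.exp_add]
          congr 1
          field_simp
          ring
        rw [hexp]; ring

lemma ff_int1 (n : ℕ) (c T R : ℝ) (hT : 0 < T) (hR : 0 ≤ R) :
    IntegrableOn (fun r : ℝ => r ^ n * Real.exp (c - r / T)) (Set.Ioi R) := by
  have hb : (0:ℝ) < 1 / (2 * T) := by positivity
  have hg : IntegrableOn
      (fun r : ℝ => (n.factorial * (2 * T) ^ n * Real.exp c) * Real.exp (-(1 / (2 * T)) * r))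
      (Set.Ioi R) := (exp_neg_integrableOn_Ioi R hb).const_mul _
  refine Integrable.mono' hg ?_ ?_
  · exact (Continuous.aestronglyMeasurable (by continuity)).restrict
  · rw [ae_restrict_iff' measurableSet_Ioi]
    refine ae_of_all _ fun x hx => ?_
    have hx0 : 0 ≤ x := le_trans hR (le_of_lt hx)
    rw [Real.norm_eq_abs, abs_of_nonneg (mul_nonneg (pow_nonneg hx0 n) (Real.exp_pos _).le)]
    exact ff_ptbound n c T hT hx0

lemma ff_intbound1 (n : ℕ) (c T R : ℝ) (hT : 0 < T) (hR : 0 ≤ R) :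
    ∫ r in Set.Ioi R, r ^ n * Real.exp (c - r / T)
      ≤ (n.factorial * (2 * T) ^ n * Real.exp c) * (Real.exp (-(1 / (2 * T)) * R) / (1 / (2 * T))) := by
  have hb : (0:ℝ) < 1 / (2 * T) := by positivity
  have hmono := setIntegral_mono_on (μ := volume)
      (ff_int1 n c T R hT hR)
      (((exp_neg_integrableOn_Ioi R hb).const_mul (n.factorial * (2 * T) ^ n * Real.exp c)))
      measurableSet_Ioi
      (fun x hx => ff_ptbound n c T hT (le_trans hR (le_of_lt hx)))
  calc ∫ r in Set.Ioi R, r ^ n * Real.exp (c - r / T)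
      ≤ ∫ r in Set.Ioi R, (n.factorial * (2 * T) ^ n * Real.exp c) * Real.exp (-(1 / (2 * T)) * r) := hmono
    _ = (n.factorial * (2 * T) ^ n * Real.exp c) * ∫ r in Set.Ioi R, Real.exp (-(1 / (2 * T)) * r) := by
        rw [MeasureTheory.integral_const_mul]
    _ = (n.factorial * (2 * T) ^ n * Real.exp c) * (Real.exp (-(1 / (2 * T)) * R) / (1 / (2 * T))) := by
        rw [ff_integral_exp_neg_mul R hb]

lemma ff_int2 (n : ℕ) (s R : ℝ) (hs : (n : ℝ) + s < -1) (hR : 0 < R) :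
    IntegrableOn (fun r : ℝ => r ^ n * r ^ s) (Set.Ioi R) := by
  refine (integrableOn_Ioi_rpow_of_lt hs hR).congr_fun (fun x hx => ?_) measurableSet_Ioi
  beta_reduce
  rw [Real.rpow_add (hR.trans hx), Real.rpow_natCast]

lemma ff_val2 (n : ℕ) (s R : ℝ) (hs : (n : ℝ) + s < -1) (hR : 0 < R) :
    ∫ r in Set.Ioi R, r ^ n * r ^ s = -R ^ ((n : ℝ) + s + 1) / ((n : ℝ) + s + 1) := by
  rw [← integral_Ioi_rpow_of_lt hs hR]
  refine setIntegral_congr_fun measurableSet_Ioi (fun x hx => ?_)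
  rw [Real.rpow_add (hR.trans hx), Real.rpow_natCast]

/-- The functional form of the Lieb-Robinson bound of Foss-Feig et al. (in the
paper's conventions): `𝒞_FF(r,t) = exp(vt − r/t^γ) + t^{(α+d)(1+γ)} r^{−(α+d)}`
with `γ = (1+d)/(α−d)`. -/
noncomputable def ffBound (v α : ℝ) (d : ℕ) (r t : ℝ) : ℝ :=
  Real.exp (v * t - r / t ^ ((1 + (d : ℝ)) / (α - d))) +
    t ^ ((α + (d : ℝ)) * (1 + (1 + (d : ℝ)) / (α - d))) * r ^ (-(α + (d : ℝ)))

/-- Appendix D.2 of the paper: every power law `r = t^{γ'}` with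
`γ' > (α+d)(α+1)/(α(α−d)) + 1/α` is an LC2 light-cone for the Foss-Feig et al.
bound: `lim_{t→∞} t ∫_{t^{γ'}}^∞ r^{d−1} 𝒞_FF(r,t) dr = 0`, with the integral
finite for every `t > 1`. -/
theorem lc2_for_foss_feig_bound (d : ℕ) (hd : 1 ≤ d) (α : ℝ) (hα : (d : ℝ) < α)
    (v : ℝ) (hv : 0 < v) :
    ∀ γ' : ℝ, (α + d) * (α + 1) / (α * (α - d)) + 1 / α < γ' →
      (∀ t : ℝ, 1 < t →
        IntegrableOn (fun r : ℝ => r ^ (d - 1) * ffBound v α d r t)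
          (Set.Ioi (t ^ γ'))) ∧
      Filter.Tendsto
        (fun t : ℝ => t * ∫ r in Set.Ioi (t ^ γ'), r ^ (d - 1) * ffBound v α d r t)
        Filter.atTop (nhds 0) := by
  intro γ' hγ'
  have hd1 : (1 : ℝ) ≤ (d : ℝ) := by exact_mod_cast hd
  have hαd : (0 : ℝ) < α - d := sub_pos.mpr hα
  have hα0 : (0 : ℝ) < α := by linarith
  set γ : ℝ := (1 + (d : ℝ)) / (α - d) with hγdef
  set A : ℝ := (α + (d : ℝ)) * (1 + γ) with hAdef
  have hγpos : 0 < γ := div_pos (by linarith) hαd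
  -- exponent facts
  have hγ'A : A + 1 < α * γ' := by
    have h1 : ((α + (d:ℝ)) * (α + 1) / (α * (α - d)) + 1 / α) * α = A + 1 := by
      rw [hAdef, hγdef]; field_simp; ring
    have h2 := mul_lt_mul_of_pos_right hγ' hα0
    rw [h1] at h2; linarith
  have hδ1 : γ + 1 < γ' := by
    have hkey : (α + (d:ℝ)) * (α + 1) / (α * (α - d)) + 1 / α - (γ + 1)
        = (α * (1 + d)) / (α * (α - d)) := by
      rw [hγdef]; field_simp; ring
    have hpos : 0 < (α * (1 + (d:ℝ))) / (α * (α - d)) :=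
      div_pos (by positivity) (by positivity)
    linarith
  set δ : ℝ := γ' - γ with hδdef
  have hδgt : 1 < δ := by simp only [hδdef]; linarith
  -- cast fact
  have hcast : ((d - 1 : ℕ) : ℝ) = (d : ℝ) - 1 := by
    rw [Nat.cast_sub hd, Nat.cast_one]
  have hs : ((d - 1 : ℕ) : ℝ) + (-(α + (d : ℝ))) < -1 := by rw [hcast]; linarith
  have he1 : ((d - 1 : ℕ) : ℝ) + (-(α + (d : ℝ))) + 1 = -α := by rw [hcast]; ring
  -- Part 1: integrability
  have hInt : ∀ t : ℝ, 1 < t →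
      IntegrableOn (fun r : ℝ => r ^ (d - 1) * ffBound v α d r t)
        (Set.Ioi (t ^ γ')) := by
    intro t ht
    have ht0 : (0:ℝ) < t := lt_trans one_pos ht
    have hT : (0:ℝ) < t ^ γ := Real.rpow_pos_of_pos ht0 γ
    have hR : (0:ℝ) < t ^ γ' := Real.rpow_pos_of_pos ht0 γ'
    have h1 := ff_int1 (d - 1) (v * t) (t ^ γ) (t ^ γ') hT hR.le
    have h2 : IntegrableOn
        (fun r : ℝ => r ^ (d - 1) * (t ^ A * r ^ (-(α + (d : ℝ))))) (Set.Ioi (t ^ γ')) := by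
      exact IntegrableOn.congr_fun
        (Integrable.const_mul (ff_int2 (d - 1) (-(α + (d : ℝ))) (t ^ γ') hs hR) (t ^ A))
        (fun x _ => by ring) measurableSet_Ioi
    have heq : (fun r : ℝ => r ^ (d - 1) * ffBound v α d r t)
        = fun r : ℝ => r ^ (d - 1) * Real.exp (v * t - r / t ^ γ)
            + r ^ (d - 1) * (t ^ A * r ^ (-(α + (d : ℝ)))) := by
      funext r
      simp only [ffBound, hγdef, hAdef]
      ring
    rw [heq]
    exact h1.add h2
  refine ⟨hInt, ?_⟩
  -- Part 2: the limit
  -- exponential piece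
  set E : ℝ → ℝ := fun t =>
    (d : ℝ) * Real.log (2 * t ^ γ) + v * t + -(t ^ γ' * (1 / (2 * t ^ γ))) + Real.log t
    with hEdef
  have hEbot : Tendsto E atTop atBot := by
    have hlog : Tendsto (fun t : ℝ => Real.log t / t) atTop (nhds 0) := by
      simpa [Function.comp] using Real.isLittleO_log_id_atTop.tendsto_div_nhds_zero
    have hϕ : Tendsto
        (fun t : ℝ => t ^ (δ - 1) / 2 + (-v - ((d : ℝ) * γ + 1) * (Real.log t / t)))
        atTop atTop := by
      have hdiv : Tendsto (fun t : ℝ => t ^ (δ - 1) / 2) atTop atTop :=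
        (tendsto_rpow_atTop (by linarith : (0:ℝ) < δ - 1)).atTop_div_const (by norm_num)
      have h6 : Tendsto (fun t : ℝ => -v - ((d : ℝ) * γ + 1) * (Real.log t / t)) atTop
          (nhds (-v)) := by
        have h7 := (tendsto_const_nhds (x := -v) (f := atTop)).sub
          (hlog.const_mul ((d : ℝ) * γ + 1))
        simpa using h7
      exact hdiv.atTop_add h6
    have hmul : Tendsto
        (fun t : ℝ => t * (t ^ (δ - 1) / 2 + (-v - ((d : ℝ) * γ + 1) * (Real.log t / t))))
        atTop atTop := Filter.Tendsto.atTop_mul_atTop₀ tendsto_id hϕ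
    have hneg : Tendsto
        (fun t : ℝ =>
          -(t * (t ^ (δ - 1) / 2 + (-v - ((d : ℝ) * γ + 1) * (Real.log t / t))))
            + (d : ℝ) * Real.log 2) atTop atBot :=
      tendsto_atBot_add_const_right _ _ (tendsto_neg_atTop_atBot.comp hmul)
    refine hneg.congr' ?_
    filter_upwards [eventually_gt_atTop (1 : ℝ)] with t ht
    have ht0 : (0:ℝ) < t := lt_trans one_pos ht
    have hT : (0:ℝ) < t ^ γ := Real.rpow_pos_of_pos ht0 γ
    have hsplit : t ^ γ' = t * t ^ (δ - 1) * t ^ γ := by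
      rw [show γ' = 1 + (δ - 1) + γ by rw [hδdef]; ring,
        Real.rpow_add ht0, Real.rpow_add ht0, Real.rpow_one]
    have hlog2 : Real.log (2 * t ^ γ) = Real.log 2 + γ * Real.log t := by
      rw [Real.log_mul two_ne_zero hT.ne', Real.log_rpow ht0]
    simp only [hEdef]
    rw [hsplit, hlog2]
    field_simp
    ring
  have hexp0 : Tendsto
      (fun t : ℝ => ((d - 1).factorial : ℝ) * Real.exp (E t)) atTop (nhds 0) := by
    simpa using (Real.tendsto_exp_atBot.comp hEbot).const_mul ((d - 1).factorial : ℝ)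
  -- bounding function for the exponential part
  set B : ℝ → ℝ := fun t =>
    t * (((d - 1).factorial : ℝ) * (2 * t ^ γ) ^ (d - 1) * Real.exp (v * t) *
      (Real.exp (-(1 / (2 * t ^ γ)) * t ^ γ') / (1 / (2 * t ^ γ)))) with hBdef
  have hBtend : Tendsto B atTop (nhds 0) := by
    refine hexp0.congr' ?_
    filter_upwards [eventually_gt_atTop (1 : ℝ)] with t ht
    have ht0 : (0:ℝ) < t := lt_trans one_pos ht
    have hT : (0:ℝ) < t ^ γ := Real.rpow_pos_of_pos ht0 γ
    have h2T : (0:ℝ) < 2 * t ^ γ := by positivity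
    simp only [hEdef, hBdef]
    rw [Real.exp_add, Real.exp_add, Real.exp_add, Real.exp_log ht0,
      show ((d:ℝ) * Real.log (2 * t ^ γ)) = ((d:ℕ) : ℝ) * Real.log (2 * t ^ γ) by norm_num,
      Real.exp_nat_mul, Real.exp_log h2T,
      show Real.exp (-(t ^ γ' * (1 / (2 * t ^ γ)))) = Real.exp (-(1 / (2 * t ^ γ)) * t ^ γ') by
        congr 1; ring,
      show (2 * t ^ γ) ^ d = (2 * t ^ γ) ^ (d - 1) * (2 * t ^ γ) by
        rw [← pow_succ, Nat.sub_add_cancel hd]]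
    field_simp
  -- the exponential part of the full expression
  have hG1 : Tendsto
      (fun t : ℝ => t * ∫ r in Set.Ioi (t ^ γ'), r ^ (d - 1) * Real.exp (v * t - r / t ^ γ))
      atTop (nhds 0) := by
    refine squeeze_zero' ?_ ?_ hBtend
    · filter_upwards [eventually_gt_atTop (1 : ℝ)] with t ht
      have ht0 : (0:ℝ) < t := lt_trans one_pos ht
      have hR : (0:ℝ) < t ^ γ' := Real.rpow_pos_of_pos ht0 γ'
      refine mul_nonneg ht0.le (setIntegral_nonneg measurableSet_Ioi fun r hr => ?_)
      have hr0 : (0:ℝ) ≤ r := le_trans hR.le (le_of_lt hr)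
      exact mul_nonneg (pow_nonneg hr0 _) (Real.exp_pos _).le
    · filter_upwards [eventually_gt_atTop (1 : ℝ)] with t ht
      have ht0 : (0:ℝ) < t := lt_trans one_pos ht
      have hT : (0:ℝ) < t ^ γ := Real.rpow_pos_of_pos ht0 γ
      have hR : (0:ℝ) < t ^ γ' := Real.rpow_pos_of_pos ht0 γ'
      have hb := ff_intbound1 (d - 1) (v * t) (t ^ γ) (t ^ γ') hT hR.le
      calc t * ∫ r in Set.Ioi (t ^ γ'), r ^ (d - 1) * Real.exp (v * t - r / t ^ γ)
          ≤ t * ((((d - 1).factorial : ℝ) * (2 * t ^ γ) ^ (d - 1) * Real.exp (v * t)) *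
              (Real.exp (-(1 / (2 * t ^ γ)) * t ^ γ') / (1 / (2 * t ^ γ)))) :=
            mul_le_mul_of_nonneg_left hb ht0.le
        _ = B t := by simp only [hBdef]
  -- the power-law part
  have hG2 : Tendsto
      (fun t : ℝ => t * ∫ r in Set.Ioi (t ^ γ'),
        r ^ (d - 1) * (t ^ A * r ^ (-(α + (d : ℝ))))) atTop (nhds 0) := by
    have hpos : (0:ℝ) < α * γ' - (1 + A) := by linarith
    have hH : Tendsto (fun t : ℝ => t ^ (-(α * γ' - (1 + A))) / α) atTop (nhds 0) := by
      simpa using (tendsto_rpow_neg_atTop hpos).div_const α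
    refine hH.congr' ?_
    filter_upwards [eventually_gt_atTop (1 : ℝ)] with t ht
    have ht0 : (0:ℝ) < t := lt_trans one_pos ht
    have hR : (0:ℝ) < t ^ γ' := Real.rpow_pos_of_pos ht0 γ'
    have hval := ff_val2 (d - 1) (-(α + (d : ℝ))) (t ^ γ') hs hR
    rw [he1] at hval
    have hfun : (fun r : ℝ => r ^ (d - 1) * (t ^ A * r ^ (-(α + (d : ℝ)))))
        = fun r : ℝ => t ^ A * (r ^ (d - 1) * r ^ (-(α + (d : ℝ)))) := by
      funext r; ring
    rw [hfun, MeasureTheory.integral_const_mul, hval, ← Real.rpow_mul ht0.le,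
      show -(α * γ' - (1 + A)) = 1 + (A + γ' * (-α)) by ring,
      Real.rpow_add ht0, Real.rpow_add ht0, Real.rpow_one]
    field_simp
  -- assemble
  have hsum : Tendsto
      (fun t : ℝ =>
        (t * ∫ r in Set.Ioi (t ^ γ'), r ^ (d - 1) * Real.exp (v * t - r / t ^ γ))
          + t * ∫ r in Set.Ioi (t ^ γ'), r ^ (d - 1) * (t ^ A * r ^ (-(α + (d : ℝ)))))
      atTop (nhds 0) := by
    simpa using hG1.add hG2
  refine hsum.congr' ?_
  filter_upwards [eventually_gt_atTop (1 : ℝ)] with t ht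
  have ht0 : (0:ℝ) < t := lt_trans one_pos ht
  have hT : (0:ℝ) < t ^ γ := Real.rpow_pos_of_pos ht0 γ
  have hR : (0:ℝ) < t ^ γ' := Real.rpow_pos_of_pos ht0 γ'
  have h1 := ff_int1 (d - 1) (v * t) (t ^ γ) (t ^ γ') hT hR.le
  have h2 : IntegrableOn
      (fun r : ℝ => r ^ (d - 1) * (t ^ A * r ^ (-(α + (d : ℝ))))) (Set.Ioi (t ^ γ')) := by
      exact IntegrableOn.congr_fun
        (Integrable.const_mul (ff_int2 (d - 1) (-(α + (d : ℝ))) (t ^ γ') hs hR) (t ^ A))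
        (fun x _ => by ring) measurableSet_Ioi
  have heq : (fun r : ℝ => r ^ (d - 1) * ffBound v α d r t)
      = fun r : ℝ => r ^ (d - 1) * Real.exp (v * t - r / t ^ γ)
          + r ^ (d - 1) * (t ^ A * r ^ (-(α + (d : ℝ)))) := by
    funext r
    simp only [ffBound, hγdef, hAdef]
    ring
  rw [heq, MeasureTheory.integral_add h1 h2, mul_add]
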